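/- Let K be a commutative ring, F : A → B a fully faithful K-linear functor between small K-categories, and D any K-linear category. Then the restriction functor Fun_K(F, D) : Fun_K(B, D) → Fun_K(A, D) is fully faithful provided the image of F additively generates B and D is saturated; in particular under these hypotheses precomposition with F is fully faithful on natural transformations. -/

import Mathlib

open CategoryTheory CategoryTheory.Limits CategoryTheory.Idempotents Opposite TensorProduct

universe w w' v u




namespace Morita

variable (K : Type u) [CommRing K]

section OpLinear

variable {C : Type*} [Category C] [Preadditive C] [Linear K C]

instance opLinear : Linear K Cᵒᵖ where
  homModule X Y := Equiv.module K (opEquiv X Y)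
  smul_comp _ _ _ _ _ _ := Quiver.Hom.unop_inj (Linear.comp_smul _ _ _ _ _ _)
  comp_smul _ _ _ _ _ _ := Quiver.Hom.unop_inj (Linear.smul_comp _ _ _ _ _ _)

@[simp]
lemma unop_smul {X Y : Cᵒᵖ} (r : K) (f : X ⟶ Y) : (r • f).unop = r • f.unop := rfl

@[simp]
lemma op_smul {X Y : C} (r : K) (f : X ⟶ Y) : (r • f).op = r • f.op := rfl

end OpLinear

/-- The property of a functor between `K`-linear categories being `K`-linear
(which subsumes additivity). -/
def IsKLinear {A : Type*} {B : Type*} [Category A] [Category B]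
    [Preadditive A] [Preadditive B] [Linear K A] [Linear K B] (F : A ⥤ B) : Prop :=
  ∃ _ : F.Additive, F.Linear K

/-- The category `Mod A` of right `A`-modules over a `K`-category `A`:
`K`-linear functors `Aᵒᵖ ⥤ ModuleCat K`. -/
abbrev ModCat (A : Type w) [Category.{v} A] [Preadditive A] [Linear K A] :=
  ObjectProperty.FullSubcategory (fun F : Aᵒᵖ ⥤ ModuleCat.{v} K => IsKLinear K F)

variable {A : Type w} [Category.{v} A] [Preadditive A] [Linear K A]

instance linearYoneda_obj_linear (x : A) : ((linearYoneda K A).obj x).Linear K where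
  map_smul {X Y} f r := by
    ext g
    show (r • f.unop) ≫ g = r • (f.unop ≫ g)
    exact Linear.smul_comp _ _ _ r f.unop g

/-- The `K`-linear Yoneda embedding `A ⥤ Mod A`. -/
def modYoneda : A ⥤ ModCat K A :=
  ObjectProperty.lift _ (linearYoneda K A) (fun _ => ⟨inferInstance, inferInstance⟩)

/-- A functor `F : A ⥤ B` between `K`-categories is a Morita equivalence if the
extension of scalars `Mod A ⥤ Mod B` along `F`, i.e. the left Kan extension of
`F ⋙ modYoneda` along `modYoneda`, is an equivalence of categories. -/
def IsMoritaEquivalence {A : Type w} {B : Type w'} [Category.{v} A] [Category.{v} B]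
    [Preadditive A] [Linear K A] [Preadditive B] [Linear K B] (F : A ⥤ B) : Prop :=
  ∃ (E : ModCat K A ⥤ ModCat K B) (α : F ⋙ modYoneda K ⟶ modYoneda K ⋙ E),
    E.IsLeftKanExtension α ∧ E.IsEquivalence

/-- Two `K`-categories are Morita equivalent if there is a `K`-linear equivalence
between their module categories. -/
def MoritaEquivalent (A : Type w) (B : Type w') [Category.{v} A] [Category.{v} B]
    [Preadditive A] [Linear K A] [Preadditive B] [Linear K B] : Prop :=
  ∃ E : ModCat K A ⥤ ModCat K B, IsKLinear K E ∧ E.IsEquivalence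

section Saturation

instance matLinear : Linear K (Mat_ A) where
  homModule M N := inferInstanceAs (Module K (∀ i j, M.X i ⟶ N.X j))
  smul_comp M N P r f g := by
    ext i k
    show ∑ j, (r • f i j) ≫ g j k = r • ∑ j, f i j ≫ g j k
    simp [Linear.smul_comp, Finset.smul_sum]
  comp_smul M N P f r g := by
    ext i k
    show ∑ j, f i j ≫ (r • g j k) = r • ∑ j, f i j ≫ g j k
    simp [Linear.comp_smul, Finset.smul_sum]

instance karoubiLinear {C : Type*} [Category C] [Preadditive C] [Linear K C] :
    Linear K (Karoubi C) where
  homModule P Q :=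
    { smul := fun r f => ⟨r • f.f, by rw [Linear.smul_comp, Linear.comp_smul, f.comm]⟩
      one_smul := fun f => by ext; exact one_smul K f.f
      mul_smul := fun r s f => by ext; exact mul_smul r s f.f
      smul_zero := fun r => by ext; exact smul_zero r
      smul_add := fun r f g => by ext; exact smul_add r f.f g.f
      add_smul := fun r s f => by ext; exact add_smul r s f.f
      zero_smul := fun f => by ext; exact zero_smul K f.f }
  smul_comp P Q R r f g := by ext; exact Linear.smul_comp _ _ _ r f.f g.f
  comp_smul P Q R f r g := by ext; exact Linear.comp_smul _ _ _ f.f r g.f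

/-- The saturation `A^♮_⊕` of a `K`-category: the idempotent completion (Karoubi
envelope) of its additive hull (matrix category). -/
abbrev Saturation (A : Type w) [Category.{v} A] [Preadditive A] :=
  Karoubi (Mat_ A)

/-- The canonical embedding `ι_A : A ⥤ A^♮_⊕`. -/
noncomputable def satEmbedding : A ⥤ Saturation A :=
  Mat_.embedding A ⋙ toKaroubi (Mat_ A)

/-- The functor `F^♮_⊕` between saturations induced by an additive functor. -/
noncomputable def satFunctor {A : Type w} {B : Type w'} [Category.{v} A] [Category.{v} B]
    [Preadditive A] [Preadditive B] (F : A ⥤ B) [F.Additive] :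
    Saturation A ⥤ Saturation B :=
  (functorExtension₂ _ _).obj F.mapMat_

end Saturation

/-- The closure of a class of objects of a preadditive category under finite
direct sums and retracts. -/
inductive AddClosure {B : Type*} [Category B] [Preadditive B] (S : Set B) : B → Prop
  | base {x : B} : x ∈ S → AddClosure S x
  | sum {x y : B} (b : BinaryBicone x y) (hb : b.IsBilimit) :
      AddClosure S x → AddClosure S y → AddClosure S b.pt
  | retract {x y : B} (i : x ⟶ y) (r : y ⟶ x) (hir : i ≫ r = 𝟙 x) :
      AddClosure S y → AddClosure S x

/-- A class of objects additively generates a preadditive category if its closure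
under finite direct sums and retracts is everything. -/
def AdditivelyGenerates {B : Type*} [Category B] [Preadditive B] (S : Set B) : Prop :=
  ∀ x : B, AddClosure S x

/-- A `K`-category is saturated if it has all finite direct sums and all
idempotents split. -/
def IsSaturated (D : Type*) [Category D] [Preadditive D] : Prop :=
  HasFiniteBiproducts D ∧ IsIdempotentComplete D

/-- The category `Fun_K(A, D)` of `K`-linear functors. -/
abbrev FunCat (A : Type w) (D : Type w') [Category.{v} A] [Category.{v} D]
    [Preadditive A] [Preadditive D] [Linear K A] [Linear K D] :=
  ObjectProperty.FullSubcategory (fun F : A ⥤ D => IsKLinear K F)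

/-- Restriction `Fun_K(B, D) ⥤ Fun_K(A, D)` along a `K`-linear functor `F : A ⥤ B`. -/
def funRes {A : Type w} {B : Type w'} {D : Type*} [Category.{v} A] [Category.{v} B]
    [Category.{v} D] [Preadditive A] [Preadditive B] [Preadditive D]
    [Linear K A] [Linear K B] [Linear K D] (F : A ⥤ B) [F.Additive] [F.Linear K] :
    FunCat K B D ⥤ FunCat K A D :=
  ObjectProperty.lift _
    (ObjectProperty.ι _ ⋙ (Functor.whiskeringLeft A B D).obj F)
    (fun G => by
      obtain ⟨a, l⟩ := G.property
      haveI := a; haveI := l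
      exact ⟨inferInstanceAs (F ⋙ G.obj).Additive, inferInstanceAs ((F ⋙ G.obj).Linear K)⟩)



section AuxFF

variable {A : Type*} {B : Type*} {D : Type*} [Category A] [Category B] [Category D]
  [Preadditive B] [Preadditive D]

/-- Every object of `B` admits a finite "covering family" through images of `F`
when the image of `F` additively generates `B`. -/
lemma exists_covering (F : A ⥤ B) (hgen : AdditivelyGenerates (Set.range F.obj)) (b : B) :
    ∃ (ι : Type) (_ : Fintype ι) (a : ι → A) (p : ∀ i, b ⟶ F.obj (a i))
      (s : ∀ i, F.obj (a i) ⟶ b), ∑ i, p i ≫ s i = 𝟙 b := by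
  induction hgen b with
  | @base x hx =>
    obtain ⟨a, rfl⟩ := hx
    exact ⟨PUnit, inferInstance, fun _ => a, fun _ => 𝟙 _, fun _ => 𝟙 _, by simp⟩
  | @sum x y c hc hx hy ihx ihy =>
    obtain ⟨ι₁, _, a₁, p₁, s₁, h₁⟩ := ihx
    obtain ⟨ι₂, _, a₂, p₂, s₂, h₂⟩ := ihy
    refine ⟨ι₁ ⊕ ι₂, inferInstance, Sum.elim a₁ a₂,
      fun i => Sum.rec (fun i => c.fst ≫ p₁ i) (fun j => c.snd ≫ p₂ j) i,
      fun i => Sum.rec (fun i => s₁ i ≫ c.inl) (fun j => s₂ j ≫ c.inr) i, ?_⟩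
    rw [Fintype.sum_sum_type]
    have e₁ : ∀ i : ι₁, (c.fst ≫ p₁ i) ≫ (s₁ i ≫ c.inl)
        = c.fst ≫ (p₁ i ≫ s₁ i) ≫ c.inl := by intro i; simp
    have e₂ : ∀ j : ι₂, (c.snd ≫ p₂ j) ≫ (s₂ j ≫ c.inr)
        = c.snd ≫ (p₂ j ≫ s₂ j) ≫ c.inr := by intro j; simp
    simp only [e₁, e₂, ← Preadditive.comp_sum, ← Preadditive.sum_comp, h₁, h₂,
      Category.id_comp]
    convert CategoryTheory.Limits.IsBilimit.binary_total hc using 2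
    · exact (Finset.sum_congr rfl fun i _ => e₁ i).trans
        (by rw [← Preadditive.comp_sum, ← Preadditive.sum_comp, h₁, Category.id_comp])
    · exact (Finset.sum_congr rfl fun j _ => e₂ j).trans
        (by rw [← Preadditive.comp_sum, ← Preadditive.sum_comp, h₂, Category.id_comp])
  | @retract x y f r hfr hy ihy =>
    obtain ⟨ι, _, a, p, s, hps⟩ := ihy
    refine ⟨ι, inferInstance, a, fun i => f ≫ p i, fun i => s i ≫ r, ?_⟩
    have e : ∀ i, (f ≫ p i) ≫ (s i ≫ r) = f ≫ (p i ≫ s i) ≫ r := by intro i; simp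
    simp only [e, ← Preadditive.comp_sum, ← Preadditive.sum_comp, hps,
      Category.id_comp, hfr]

/-- A natural transformation is determined by its components on a covering family. -/
lemma app_eq_of_covering (F : A ⥤ B) (G H : B ⥤ D) [H.Additive] (α : G ⟶ H) (b : B)
    {ι : Type} [Fintype ι] {a : ι → A} (p : ∀ i, b ⟶ F.obj (a i))
    (s : ∀ i, F.obj (a i) ⟶ b) (hps : ∑ i, p i ≫ s i = 𝟙 b) :
    α.app b = ∑ i, G.map (p i) ≫ α.app (F.obj (a i)) ≫ H.map (s i) := by
  have : α.app b = α.app b ≫ H.map (∑ i, p i ≫ s i) := by simp [hps]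
  rw [this, Functor.map_sum, Preadditive.comp_sum]
  refine Finset.sum_congr rfl fun i _ => ?_
  rw [H.map_comp, ← Category.assoc, ← α.naturality, Category.assoc]

/-- The extension of `γ` restricts to `γ` on the image of `F`. -/
lemma ext_app (F : A ⥤ B) [F.Full] (G H : B ⥤ D) [H.Additive] (γ : F ⋙ G ⟶ F ⋙ H)
    (x : A) {ι : Type} [Fintype ι] {a : ι → A} (p : ∀ i, F.obj x ⟶ F.obj (a i))
    (s : ∀ i, F.obj (a i) ⟶ F.obj x) (hps : ∑ i, p i ≫ s i = 𝟙 (F.obj x)) :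
    ∑ i, G.map (p i) ≫ γ.app (a i) ≫ H.map (s i) = γ.app x := by
  have e : ∀ i, G.map (p i) ≫ γ.app (a i) ≫ H.map (s i)
      = γ.app x ≫ H.map (p i ≫ s i) := by
    intro i
    have hu : F.map (F.preimage (p i)) = p i := F.map_preimage _
    have := γ.naturality (F.preimage (p i))
    simp only [Functor.comp_map, hu] at this
    rw [← Category.assoc, this, Category.assoc, ← H.map_comp]
  simp only [e, ← Preadditive.comp_sum, ← Functor.map_sum, hps]
  simp

/-- Naturality of the extension of `γ`. -/
lemma ext_naturality (F : A ⥤ B) [F.Full] (G H : B ⥤ D) [G.Additive] [H.Additive]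
    (γ : F ⋙ G ⟶ F ⋙ H) {b b' : B} (h : b ⟶ b')
    {ι ι' : Type} [Fintype ι] [Fintype ι']
    {a : ι → A} (p : ∀ i, b ⟶ F.obj (a i)) (s : ∀ i, F.obj (a i) ⟶ b)
    (hps : ∑ i, p i ≫ s i = 𝟙 b)
    {a' : ι' → A} (p' : ∀ j, b' ⟶ F.obj (a' j)) (s' : ∀ j, F.obj (a' j) ⟶ b')
    (hps' : ∑ j, p' j ≫ s' j = 𝟙 b') :
    G.map h ≫ ∑ j, G.map (p' j) ≫ γ.app (a' j) ≫ H.map (s' j)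
      = (∑ i, G.map (p i) ≫ γ.app (a i) ≫ H.map (s i)) ≫ H.map h := by
  have key : ∀ j : ι', G.map (h ≫ p' j) ≫ γ.app (a' j)
      = (∑ i, G.map (p i) ≫ γ.app (a i) ≫ H.map (s i ≫ h ≫ p' j)) := by
    intro j
    have e : ∀ i : ι, G.map (p i) ≫ γ.app (a i) ≫ H.map (s i ≫ h ≫ p' j)
        = G.map ((p i ≫ s i) ≫ h ≫ p' j) ≫ γ.app (a' j) := by
      intro i
      have hu : F.map (F.preimage (s i ≫ h ≫ p' j)) = s i ≫ h ≫ p' j :=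
        F.map_preimage _
      have hn := γ.naturality (F.preimage (s i ≫ h ≫ p' j))
      simp only [Functor.comp_map, hu] at hn
      rw [← hn, ← Category.assoc, ← G.map_comp]
      simp
    simp only [e, ← Preadditive.sum_comp, ← Functor.map_sum, ← Preadditive.sum_comp_assoc]
    rw [hps]
    simp
  calc G.map h ≫ ∑ j, G.map (p' j) ≫ γ.app (a' j) ≫ H.map (s' j)
      = ∑ j, G.map (h ≫ p' j) ≫ γ.app (a' j) ≫ H.map (s' j) := by
        simp [Preadditive.comp_sum, G.map_comp]
    _ = ∑ j, (∑ i, G.map (p i) ≫ γ.app (a i) ≫ H.map (s i ≫ h ≫ p' j)) ≫ H.map (s' j) := by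
        refine Finset.sum_congr rfl fun j _ => ?_
        rw [← Category.assoc, key j]
    _ = (∑ i, G.map (p i) ≫ γ.app (a i) ≫ H.map (s i)) ≫ H.map h := by
        simp only [Preadditive.sum_comp]
        rw [Finset.sum_comm]
        refine Finset.sum_congr rfl fun i _ => ?_
        simp only [Category.assoc, ← Functor.map_comp, ← Preadditive.comp_sum,
          ← Functor.map_sum]
        congr 3
        rw [hps', Category.comp_id]

end AuxFF

/-- Restriction along a fully faithful functor whose image additively generates
the target is fully faithful, for functors into a saturated category. -/
theorem funRes_fullyFaithful
    (K : Type u) [CommRing K] {A B : Type v} [Category.{v} A] [Category.{v} B]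
    [Preadditive A] [Linear K A] [Preadditive B] [Linear K B]
    {D : Type w'} [Category.{v} D] [Preadditive D] [Linear K D] (hD : IsSaturated D)
    (F : A ⥤ B) [F.Additive] [F.Linear K] (hfull : F.Full) (hfaithful : F.Faithful)
    (hgen : AdditivelyGenerates (Set.range F.obj)) :
    (funRes K (D := D) F).Full ∧ (funRes K (D := D) F).Faithful := by
  haveI := hfull
  haveI := hfaithful
  have cov := fun b => exists_covering F hgen b
  choose ι fι a p s hps using cov
  constructor
  · constructor
    intro G H γ
    obtain ⟨aG, lG⟩ := G.property
    obtain ⟨aH, lH⟩ := H.property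
    haveI := aG; haveI := aH
    let γ' : F ⋙ G.obj ⟶ F ⋙ H.obj := γ.hom
    letI : ∀ b, Fintype (ι b) := fι
    let α : G.obj ⟶ H.obj :=
      { app := fun b => ∑ i, G.obj.map (p b i) ≫ γ'.app (a b i) ≫ H.obj.map (s b i)
        naturality := fun b b' h =>
          ext_naturality F G.obj H.obj γ' h (p b) (s b) (hps b) (p b') (s b') (hps b') }
    refine ⟨ObjectProperty.homMk α, ?_⟩
    apply ObjectProperty.hom_ext
    show Functor.whiskerLeft F α = γ'
    ext x
    show α.app (F.obj x) = γ'.app x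
    exact ext_app F G.obj H.obj γ' x (p _) (s _) (hps _)
  · constructor
    intro G H α β hαβ
    obtain ⟨aG, lG⟩ := G.property
    obtain ⟨aH, lH⟩ := H.property
    haveI := aG; haveI := aH
    letI : ∀ b, Fintype (ι b) := fι
    let α' : G.obj ⟶ H.obj := α.hom
    let β' : G.obj ⟶ H.obj := β.hom
    have h' : Functor.whiskerLeft F α' = Functor.whiskerLeft F β' := congrArg (fun f => f.hom) hαβ
    apply ObjectProperty.hom_ext
    show α' = β'
    ext b
    rw [app_eq_of_covering F G.obj H.obj α' b (p b) (s b) (hps b),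
      app_eq_of_covering F G.obj H.obj β' b (p b) (s b) (hps b)]
    refine Finset.sum_congr rfl fun i _ => ?_
    have : α'.app (F.obj (a b i)) = β'.app (F.obj (a b i)) := by
      exact congrArg (fun δ => NatTrans.app δ (a b i)) h'
    rw [this]

end Morita
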